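/- arXiv:1409.6573 — 3 statements merged into one kernel-verified Lean document; each statement's English description precedes it below -/
import Mathlib

section
/- Let H be a real Hilbert space and let t ↦ T(t) be a map from [0,1] to the bounded invertible linear operators on H such that t ↦ T(t)x is continuous for every x ∈ H and sup_{t ∈ [0,1]} (‖T(t)‖ + ‖T(t)⁻¹‖) < ∞. Define the bounded operator R : H → H by Rx = ∫₀¹ T(t) T(t)* x dt (Bochner integral). Then for every x ∈ H one has ⟨Rx, x⟩ ≥ (∫₀¹ ‖T(t)⁻¹‖⁻² dt) ‖x‖², and R is an invertible bounded operator on H, with ‖R⁻¹‖ ≤ (∫₀¹ ‖T(t)⁻¹‖⁻² dt)⁻¹. -/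
open scoped BigOperators ENNReal InnerProductSpace
open MeasureTheory Filter



private lemma proj_tendsto {H : Type*} [NormedAddCommGroup H] [InnerProductSpace ℝ H]
    (e : ℕ → H) (horth : ∀ i j, i ≠ j → ⟪e i, e j⟫_ℝ = 0)
    (hnorm : ∀ i, e i = 0 ∨ ‖e i‖ = 1)
    (v : H) (hv : v ∈ closure ((Submodule.span ℝ (Set.range e) : Submodule ℝ H) : Set H)) :
    Tendsto (fun n => ∑ i ∈ Finset.range n, ⟪v, e i⟫_ℝ • e i) atTop (nhds v) := by
  rw [Metric.tendsto_atTop]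
  intro ε hε
  obtain ⟨w, hw, hwv⟩ : ∃ w ∈ (Submodule.span ℝ (Set.range e) : Submodule ℝ H), dist v w < ε := by
    rcases Metric.mem_closure_iff.1 hv ε hε with ⟨w, hw, hd⟩
    exact ⟨w, hw, hd⟩
  rw [Finsupp.mem_span_range_iff_exists_finsupp] at hw
  obtain ⟨c, hc⟩ := hw
  obtain ⟨N, hsupp⟩ : ∃ N : ℕ, ∀ i ∈ c.support, i < N := by
    rcases c.support.bddAbove with ⟨N, hN⟩
    exact ⟨N + 1, fun i hi => Nat.lt_succ_of_le (hN hi)⟩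
  refine ⟨N, fun n hn => ?_⟩
  have hw' : w = ∑ i ∈ Finset.range n, c i • e i := by
    rw [← hc]
    exact Finsupp.sum_of_support_subset c
      (fun i hi => Finset.mem_range.2 ((hsupp i hi).trans_le hn)) _ (fun i _ => zero_smul ℝ (e i))
  set P := ∑ i ∈ Finset.range n, ⟪v, e i⟫_ℝ • e i with hP
  have horthP : ∀ i ∈ Finset.range n, ⟪v - P, e i⟫_ℝ = 0 := by
    intro i hi0
    rw [inner_sub_left, hP, sum_inner]
    have : ∀ j ∈ Finset.range n, ⟪⟪v, e j⟫_ℝ • e j, e i⟫_ℝ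
        = if j = i then ⟪v, e i⟫_ℝ * ⟪e i, e i⟫_ℝ else 0 := by
      intro j _
      rcases eq_or_ne j i with rfl | hji
      · simp [real_inner_smul_left]
      · rw [real_inner_smul_left, horth j i hji, mul_zero, if_neg hji]
    rw [Finset.sum_congr rfl this, Finset.sum_ite_eq']
    rcases hnorm i with h0 | h1
    · simp [h0]
    · rw [if_pos hi0, real_inner_self_eq_norm_sq, h1]; ring
  have hperp : ⟪v - P, P - w⟫_ℝ = 0 := by
    have : P - w = ∑ i ∈ Finset.range n, (⟪v, e i⟫_ℝ - c i) • e i := by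
      rw [hP, hw', ← Finset.sum_sub_distrib]
      exact Finset.sum_congr rfl fun i _ => (sub_smul _ _ _).symm
    rw [this, inner_sum]
    refine Finset.sum_eq_zero fun i hi => ?_
    rw [real_inner_smul_right, horthP i hi, mul_zero]
  have key : ‖v - P‖ ≤ ‖v - w‖ := by
    have hdecomp : v - w = (v - P) + (P - w) := by abel
    have := norm_add_sq_real (v - P) (P - w)
    rw [hperp] at this
    have h2 : ‖v - P‖ ^ 2 ≤ ‖v - w‖ ^ 2 := by
      rw [hdecomp, this]; nlinarith [sq_nonneg ‖P - w‖]
    exact (pow_le_pow_iff_left₀ (norm_nonneg _) (norm_nonneg _) two_ne_zero).1 h2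
  calc dist (∑ i ∈ Finset.range n, ⟪v, e i⟫_ℝ • e i) v = ‖v - P‖ := by
        rw [dist_eq_norm, ← hP, norm_sub_rev]
    _ ≤ ‖v - w‖ := key
    _ < ε := by rwa [dist_eq_norm] at hwv


private def cl (r : ℝ) : ℝ := max 0 (min 1 r)

private lemma cl_mem (r : ℝ) : cl r ∈ Set.Icc (0:ℝ) 1 :=
  ⟨le_max_left _ _, max_le zero_le_one (min_le_left _ _)⟩

private lemma cl_eq {t : ℝ} (ht : t ∈ Set.Icc (0:ℝ) 1) : cl t = t := by
  rcases ht with ⟨h0, h1⟩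
  rw [cl, min_eq_right h1, max_eq_right h0]

private lemma cl_lip (a b : ℝ) : |cl a - cl b| ≤ |a - b| := by
  unfold cl
  calc |max 0 (min 1 a) - max 0 (min 1 b)| ≤ |min 1 a - min 1 b| := by
        rw [max_comm 0 (min 1 a), max_comm 0 (min 1 b)]
        exact abs_max_sub_max_le_abs _ _ _
    _ ≤ max |1 - 1| |a - b| := abs_min_sub_min_le_max _ _ _ _
    _ = |a - b| := by simp

private lemma cl_cont : Continuous cl :=
  continuous_const.max (continuous_const.min continuous_id)

private lemma cl_tendsto {t : ℝ} (ht : t ∈ Set.Icc (0:ℝ) 1) {u : ℕ → ℝ}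
    (hu : ∀ n : ℕ, |u n - t| ≤ 1/((n:ℝ)+1)) :
    Tendsto (fun n => cl (u n)) atTop (nhdsWithin t (Set.Icc 0 1)) := by
  rw [tendsto_nhdsWithin_iff]
  refine ⟨tendsto_iff_dist_tendsto_zero.2 ?_, Eventually.of_forall fun n => cl_mem _⟩
  refine squeeze_zero (fun n => dist_nonneg) (fun n => ?_)
    tendsto_one_div_add_atTop_nhds_zero_nat
  rw [Real.dist_eq]
  calc |cl (u n) - t| = |cl (u n) - cl t| := by rw [cl_eq ht]
    _ ≤ |u n - t| := cl_lip _ _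
    _ ≤ 1/((n:ℝ)+1) := hu n

private lemma aesm_pair {H : Type*} [NormedAddCommGroup H] [InnerProductSpace ℝ H]
    [CompleteSpace H] (T : ℝ → H ≃L[ℝ] H)
    (hcont : ∀ x : H, ContinuousOn (fun t => (T t) x) (Set.Icc 0 1)) (x : H) :
    AEStronglyMeasurable (fun t => (ContinuousLinearMap.adjoint (T t : H →L[ℝ] H)) x)
      (volume.restrict (Set.Icc (0:ℝ) 1)) ∧
    AEStronglyMeasurable (fun t => (T t) ((ContinuousLinearMap.adjoint (T t : H →L[ℝ] H)) x))
      (volume.restrict (Set.Icc (0:ℝ) 1)) := by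
  set μ := volume.restrict (Set.Icc (0:ℝ) 1) with hμ
  set g : ℝ → H := fun t => (ContinuousLinearMap.adjoint (T t : H →L[ℝ] H)) x with hg
  -- weak continuity of g
  have hwk : ∀ z : H, ContinuousOn (fun t => ⟪g t, z⟫_ℝ) (Set.Icc (0:ℝ) 1) := by
    intro z
    have : ∀ t : ℝ, ⟪g t, z⟫_ℝ = ⟪x, (T t) z⟫_ℝ := fun t =>
      ContinuousLinearMap.adjoint_inner_left (T t : H →L[ℝ] H) z x
    exact (continuousOn_const.inner (hcont z)).congr fun t _ => this t
  -- countable family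
  obtain ⟨q, hq⟩ := exists_surjective_nat ℚ
  set d : ℕ → H := fun n => g (cl (q n)) with hd
  set e : ℕ → H := fun n => InnerProductSpace.gramSchmidtNormed ℝ d n with he
  have horth : ∀ i j, i ≠ j → ⟪e i, e j⟫_ℝ = 0 := by
    intro i j hij
    simp only [he, InnerProductSpace.gramSchmidtNormed, real_inner_smul_left, real_inner_smul_right]
    rw [InnerProductSpace.gramSchmidt_orthogonal ℝ d hij]
    ring
  have hnorm : ∀ i, e i = 0 ∨ ‖e i‖ = 1 := by
    intro i
    by_cases h0 : InnerProductSpace.gramSchmidt ℝ d i = 0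
    · left; simp [he, InnerProductSpace.gramSchmidtNormed, h0]
    · right
      refine InnerProductSpace.gramSchmidtNormed_unit_length' (n := i) ?_
      simp only [InnerProductSpace.gramSchmidtNormed, ne_eq, smul_eq_zero, not_or]
      exact ⟨by simpa using h0, h0⟩
  set K : Submodule ℝ H := Submodule.span ℝ (Set.range e) with hK
  have hdK : ∀ n, d n ∈ K := by
    intro n
    have h1 : d n ∈ Submodule.span ℝ (Set.range (InnerProductSpace.gramSchmidt ℝ d)) := by
      rw [InnerProductSpace.span_gramSchmidt ℝ d]
      exact Submodule.subset_span ⟨n, rfl⟩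
    refine Submodule.span_le.2 ?_ h1
    rintro _ ⟨i, rfl⟩
    by_cases h0 : InnerProductSpace.gramSchmidt ℝ d i = 0
    · rw [h0]; exact Submodule.zero_mem K
    · have : InnerProductSpace.gramSchmidt ℝ d i = ‖InnerProductSpace.gramSchmidt ℝ d i‖ • e i := by
        rw [he]; simp only [InnerProductSpace.gramSchmidtNormed, RCLike.ofReal_real_eq_id, id_eq]
        rw [smul_smul, mul_inv_cancel₀ (norm_ne_zero_iff.2 h0), one_smul]
      rw [this]
      exact Submodule.smul_mem K _ (Submodule.subset_span ⟨i, rfl⟩)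
  have hvK : ∀ t ∈ Set.Icc (0:ℝ) 1, g t ∈ closure (K : Set H) := by
    intro t ht
    rw [← Submodule.topologicalClosure_coe, ← Submodule.orthogonal_orthogonal_eq_closure]
    rw [SetLike.mem_coe, Submodule.mem_orthogonal]
    intro w hw
    -- rational approximations of t
    have hrat : ∀ n : ℕ, ∃ r : ℚ, |t - (r:ℝ)| < 1/((n:ℝ)+1) := fun n =>
      exists_rat_near t (by positivity)
    choose r hr using hrat
    have hr' : ∀ n : ℕ, |(r n : ℝ) - t| ≤ 1/((n:ℝ)+1) := by
      intro n
      rw [abs_sub_comm]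
      exact (hr n).le
    have htd : Tendsto (fun n => cl ((r n : ℝ))) atTop (nhdsWithin t (Set.Icc 0 1)) :=
      cl_tendsto ht hr'
    have hzero : ∀ n : ℕ, ⟪g (cl ((r n : ℝ))), w⟫_ℝ = 0 := by
      intro n
      obtain ⟨m, hm⟩ := hq (r n)
      have : g (cl ((r n : ℝ))) = d m := by rw [hd]; simp [hm]
      rw [this]
      exact real_inner_comm (d m) w ▸ hw (d m) (hdK m)
    have hlim : Tendsto (fun n => ⟪g (cl ((r n : ℝ))), w⟫_ℝ) atTop (nhds ⟪g t, w⟫_ℝ) :=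
      ((hwk w t ht).tendsto).comp htd
    have : ⟪g t, w⟫_ℝ = 0 :=
      tendsto_nhds_unique hlim (by simpa only [hzero] using (tendsto_const_nhds :
        Tendsto (fun _ : ℕ => (0:ℝ)) atTop (nhds 0)))
    rw [real_inner_comm] at this
    exact this
  -- strong measurability of g
  have hgseq : ∀ n : ℕ, ContinuousOn (fun t => ∑ i ∈ Finset.range n, ⟪g t, e i⟫_ℝ • e i)
      (Set.Icc (0:ℝ) 1) := by
    intro n
    refine continuousOn_finset_sum _ fun i _ => ?_
    exact (hwk (e i)).smul continuousOn_const
  have hgm : AEStronglyMeasurable g μ := by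
    refine aestronglyMeasurable_of_tendsto_ae atTop
      (fun n => (hgseq n).aestronglyMeasurable measurableSet_Icc) ?_
    filter_upwards [ae_restrict_mem measurableSet_Icc] with t ht
    exact proj_tendsto e horth hnorm (g t) (hvK t ht)
  refine ⟨hgm, ?_⟩
  -- strong measurability of t ↦ T t (g t)
  have haesm : ∀ n : ℕ, AEStronglyMeasurable
      (fun t => (T (cl ((⌈((n:ℝ)+1) * t⌉ : ℤ) / ((n:ℝ)+1)))) (g t)) μ := by
    intro n
    have hterm : ∀ k : ℕ, AEStronglyMeasurable
        (fun t => ({t' : ℝ | ⌈((n:ℝ)+1) * t'⌉ = (k:ℤ)}.indicator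
          (fun t' => (T (cl ((k:ℝ)/((n:ℝ)+1)))) (g t')) t)) μ := by
      intro k
      have hset : MeasurableSet {t' : ℝ | ⌈((n:ℝ)+1) * t'⌉ = (k:ℤ)} := by
        have : Measurable fun t' : ℝ => (⌈((n:ℝ)+1) * t'⌉ : ℤ) :=
          Int.measurable_ceil.comp (measurable_const.mul measurable_id)
        exact this (MeasurableSet.singleton (k:ℤ))
      exact (((T (cl ((k:ℝ)/((n:ℝ)+1)))).continuous).comp_aestronglyMeasurable hgm).indicator hset
    have hFm : AEStronglyMeasurable (fun t => ∑ k ∈ Finset.range (n+2),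
        ({t' : ℝ | ⌈((n:ℝ)+1) * t'⌉ = (k:ℤ)}.indicator
          (fun t' => (T (cl ((k:ℝ)/((n:ℝ)+1)))) (g t')) t)) μ := by
      classical
      induction (Finset.range (n+2)) using Finset.induction_on with
      | empty => simpa using aestronglyMeasurable_const
      | insert _ _ hx ih => simpa [Finset.sum_insert hx, Pi.add_def] using (hterm _).add ih
    refine hFm.congr ?_
    filter_upwards [ae_restrict_mem measurableSet_Icc] with t ht
    have hK0 : (0:ℤ) ≤ ⌈((n:ℝ)+1) * t⌉ :=
      Int.ceil_nonneg (mul_nonneg (by positivity) ht.1)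
    have hK1 : ⌈((n:ℝ)+1) * t⌉ ≤ (n:ℤ) + 1 := by
      rw [Int.ceil_le]
      push_cast
      nlinarith [ht.2, (by positivity : (0:ℝ) ≤ (n:ℝ)+1)]
    set K := ⌈((n:ℝ)+1) * t⌉ with hKdef
    have hk0 : (K.toNat : ℤ) = K := Int.toNat_of_nonneg hK0
    have hmem : K.toNat ∈ Finset.range (n+2) := by
      rw [Finset.mem_range]
      have : K.toNat ≤ n + 1 := by
        rw [Int.toNat_le]
        exact_mod_cast hK1
      omega
    have hzero : ∀ k ∈ Finset.range (n+2), k ≠ K.toNat →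
        {t' : ℝ | ⌈((n:ℝ)+1) * t'⌉ = (k:ℤ)}.indicator
          (fun t' => (T (cl ((k:ℝ)/((n:ℝ)+1)))) (g t')) t = 0 := by
      intro k _ hne
      refine Set.indicator_of_notMem ?_ _
      intro hmem'
      have h' : ⌈((n:ℝ)+1)*t⌉ = (k:ℤ) := hmem'
      refine hne ?_
      have : (k:ℤ) = (K.toNat : ℤ) := by rw [hk0, hKdef]; exact h'.symm
      exact_mod_cast this
    have hmemset : t ∈ {t' : ℝ | ⌈((n:ℝ)+1) * t'⌉ = ((K.toNat : ℕ):ℤ)} := by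
      show ⌈((n:ℝ)+1) * t⌉ = ((K.toNat : ℕ) : ℤ)
      rw [hk0, hKdef]
    rw [Finset.sum_eq_single_of_mem K.toNat hmem hzero, Set.indicator_of_mem hmemset]
    have hcast : ((K.toNat : ℕ) : ℝ) = (K : ℝ) := by exact_mod_cast hk0
    rw [hcast]
  refine aestronglyMeasurable_of_tendsto_ae atTop haesm ?_
  filter_upwards [ae_restrict_mem measurableSet_Icc] with t ht
  have hu : ∀ n : ℕ, |((⌈((n:ℝ)+1) * t⌉ : ℤ) : ℝ)/((n:ℝ)+1) - t| ≤ 1/((n:ℝ)+1) := by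
    intro n
    have hn1 : (0:ℝ) < (n:ℝ)+1 := by positivity
    have h1 : ((n:ℝ)+1) * t ≤ ((⌈((n:ℝ)+1)*t⌉ : ℤ) : ℝ) := Int.le_ceil _
    have h2 : ((⌈((n:ℝ)+1)*t⌉ : ℤ) : ℝ) < ((n:ℝ)+1)*t + 1 := Int.ceil_lt_add_one _
    have e1 : t ≤ ((⌈((n:ℝ)+1)*t⌉ : ℤ) : ℝ)/((n:ℝ)+1) := by
      rw [le_div_iff₀ hn1]; nlinarith
    have e2 : ((⌈((n:ℝ)+1)*t⌉ : ℤ) : ℝ)/((n:ℝ)+1) ≤ t + 1/((n:ℝ)+1) := by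
      rw [div_le_iff₀ hn1]
      have hmc : (1/((n:ℝ)+1)) * ((n:ℝ)+1) = 1 := by
        field_simp
      nlinarith
    rw [abs_le]
    constructor <;> [linarith [one_div_pos.2 hn1]; linarith]
  have htd : Tendsto (fun n : ℕ => cl (((⌈((n:ℝ)+1) * t⌉ : ℤ) : ℝ)/((n:ℝ)+1))) atTop
      (nhdsWithin t (Set.Icc 0 1)) := cl_tendsto ht hu
  exact ((hcont (g t)) t ht).tendsto.comp htd

private lemma sphere_ne {H : Type*} [NormedAddCommGroup H] [InnerProductSpace ℝ H]
    [Nontrivial H] : Nonempty (Metric.sphere (0:H) 1) := by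
  obtain ⟨z₀, hz₀⟩ : ∃ z₀ : H, ‖z₀‖ = 1 := exists_norm_eq H zero_le_one
  exact ⟨⟨z₀, by simpa using hz₀⟩⟩

private lemma norm_coe_sphere {H : Type*} [NormedAddCommGroup H] [InnerProductSpace ℝ H]
    (z : Metric.sphere (0:H) 1) : ‖(z : H)‖ = 1 := by
  have := z.2
  simpa using this

private lemma symm_norm_pos {H : Type*} [NormedAddCommGroup H] [InnerProductSpace ℝ H]
    [Nontrivial H] (S : H ≃L[ℝ] H) : 0 < ‖(S.symm : H →L[ℝ] H)‖ := by
  obtain ⟨z₀⟩ := sphere_ne (H := H)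
  rcases (norm_nonneg ((S.symm : H →L[ℝ] H))).lt_or_eq with h | h
  · exact h
  · exfalso
    have hB0 : (S.symm : H →L[ℝ] H) = 0 := by
      rw [← norm_eq_zero]; exact h.symm
    have h1 : (S.symm : H →L[ℝ] H) (S (z₀ : H)) = (z₀ : H) := S.symm_apply_apply _
    rw [hB0] at h1
    have : ‖(z₀ : H)‖ = 1 := norm_coe_sphere z₀
    rw [← h1] at this
    simp at this

private lemma inv_norm_eq {H : Type*} [NormedAddCommGroup H] [InnerProductSpace ℝ H]
    [Nontrivial H] (S : H ≃L[ℝ] H) :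
    (⨅ z : Metric.sphere (0:H) 1, ‖(S : H →L[ℝ] H) (z : H)‖) = ‖(S.symm : H →L[ℝ] H)‖⁻¹ := by
  haveI : Nonempty (Metric.sphere (0:H) 1) := sphere_ne
  have hbdd : BddBelow (Set.range fun z : Metric.sphere (0:H) 1 => ‖(S : H →L[ℝ] H) (z : H)‖) := by
    refine ⟨0, ?_⟩
    rintro y ⟨z, rfl⟩
    exact norm_nonneg _
  have hBpos : 0 < ‖(S.symm : H →L[ℝ] H)‖ := symm_norm_pos S
  have hlow : ∀ z : Metric.sphere (0:H) 1, ‖(S.symm : H →L[ℝ] H)‖⁻¹ ≤ ‖(S : H →L[ℝ] H) (z : H)‖ := by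
    intro z
    have h1 : ‖(z : H)‖ = 1 := norm_coe_sphere z
    have h2 : (S.symm : H →L[ℝ] H) ((S : H →L[ℝ] H) (z : H)) = (z : H) := S.symm_apply_apply _
    have h3 : (1:ℝ) ≤ ‖(S.symm : H →L[ℝ] H)‖ * ‖(S : H →L[ℝ] H) (z : H)‖ := by
      calc (1:ℝ) = ‖(z : H)‖ := h1.symm
        _ = ‖(S.symm : H →L[ℝ] H) ((S : H →L[ℝ] H) (z : H))‖ := by rw [h2]
        _ ≤ ‖(S.symm : H →L[ℝ] H)‖ * ‖(S : H →L[ℝ] H) (z : H)‖ :=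
          ContinuousLinearMap.le_opNorm _ _
    have h4 := mul_inv_cancel₀ hBpos.ne'
    nlinarith [norm_nonneg ((S : H →L[ℝ] H) (z : H))]
  have hm_ge : ‖(S.symm : H →L[ℝ] H)‖⁻¹ ≤ ⨅ z : Metric.sphere (0:H) 1,
      ‖(S : H →L[ℝ] H) (z : H)‖ := le_ciInf hlow
  have hmpos : 0 < ⨅ z : Metric.sphere (0:H) 1, ‖(S : H →L[ℝ] H) (z : H)‖ :=
    lt_of_lt_of_le (inv_pos.2 hBpos) hm_ge
  set m := ⨅ z : Metric.sphere (0:H) 1, ‖(S : H →L[ℝ] H) (z : H)‖ with hm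
  have hup : ‖(S.symm : H →L[ℝ] H)‖ ≤ m⁻¹ := by
    refine ContinuousLinearMap.opNorm_le_bound _ (by positivity) fun y => ?_
    by_cases hy : y = 0
    · simp [hy]
    · set u := (S.symm : H →L[ℝ] H) y with hu
      have hSu : (S : H →L[ℝ] H) u = y := S.apply_symm_apply y
      have hune : u ≠ 0 := by
        intro h0
        rw [h0] at hSu
        simp at hSu
        exact hy hSu.symm
      have hupos : 0 < ‖u‖ := norm_pos_iff.2 hune
      set z : H := ‖u‖⁻¹ • u with hz
      have hzn : ‖z‖ = 1 := by
        rw [hz, norm_smul, norm_inv, norm_norm, inv_mul_cancel₀ hupos.ne']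
      have hmem : z ∈ Metric.sphere (0:H) 1 := by simpa using hzn
      have hmle : m ≤ ‖(S : H →L[ℝ] H) z‖ := ciInf_le hbdd ⟨z, hmem⟩
      have hSz : ‖(S : H →L[ℝ] H) z‖ = ‖u‖⁻¹ * ‖y‖ := by
        rw [hz, _root_.map_smul, norm_smul, norm_inv, norm_norm, hSu]
      rw [hSz] at hmle
      have := mul_inv_cancel₀ hmpos.ne'
      have h5 : m * ‖u‖ ≤ ‖y‖ := by
        have := mul_le_mul_of_nonneg_right hmle hupos.le
        calc m * ‖u‖ ≤ ‖u‖⁻¹ * ‖y‖ * ‖u‖ := this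
          _ = ‖y‖ * (‖u‖⁻¹ * ‖u‖) := by ring
          _ = ‖y‖ := by rw [inv_mul_cancel₀ hupos.ne', mul_one]
      calc ‖u‖ = m⁻¹ * (m * ‖u‖) := by
            rw [← mul_assoc, inv_mul_cancel₀ hmpos.ne', one_mul]
        _ ≤ m⁻¹ * ‖y‖ := by
            exact mul_le_mul_of_nonneg_left h5 (by positivity)
  refine le_antisymm ?_ hm_ge
  have h6 : (m⁻¹)⁻¹ ≤ ‖(S.symm : H →L[ℝ] H)‖⁻¹ := by
    gcongr
  rwa [inv_inv] at h6

private lemma mbar_measurable {H : Type*} [NormedAddCommGroup H] [InnerProductSpace ℝ H]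
    [Nontrivial H] (T : ℝ → H ≃L[ℝ] H)
    (hcont : ∀ x : H, ContinuousOn (fun t => (T t) x) (Set.Icc 0 1)) :
    Measurable (fun t => ⨅ z : Metric.sphere (0:H) 1,
      ‖(T (cl t) : H →L[ℝ] H) (z : H)‖) := by
  haveI : Nonempty (Metric.sphere (0:H) 1) := sphere_ne
  refine measurable_of_Iio fun y => ?_
  have hBdd : ∀ t : ℝ, BddBelow (Set.range fun z : Metric.sphere (0:H) 1 =>
      ‖(T (cl t) : H →L[ℝ] H) (z : H)‖) := by
    intro t
    refine ⟨0, ?_⟩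
    rintro s ⟨z, rfl⟩
    exact norm_nonneg _
  have hset : (fun t => ⨅ z : Metric.sphere (0:H) 1,
      ‖(T (cl t) : H →L[ℝ] H) (z : H)‖) ⁻¹' (Set.Iio y) =
      ⋃ z : Metric.sphere (0:H) 1, {t : ℝ | ‖(T (cl t) : H →L[ℝ] H) (z : H)‖ < y} := by
    ext t
    simp only [Set.mem_preimage, Set.mem_Iio, Set.mem_iUnion, Set.mem_setOf_eq]
    constructor
    · intro h
      exact exists_lt_of_ciInf_lt h
    · rintro ⟨z, hz⟩
      exact lt_of_le_of_lt (ciInf_le (hBdd t) z) hz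
  rw [hset]
  refine IsOpen.measurableSet (isOpen_iUnion fun z => ?_)
  have hcz : Continuous fun t => (T (cl t) : H →L[ℝ] H) (z : H) := by
    have : Continuous fun t => (T (cl t)) (z : H) :=
      (hcont (z : H)).comp_continuous cl_cont cl_mem
    exact this
  exact isOpen_lt hcz.norm continuous_const

set_option maxHeartbeats 2000000 in
/-- For a strongly continuous, uniformly bounded family of invertible operators
`T(t)` on a real Hilbert space, the operator `R = ∫₀¹ T(t) T(t)* dt` satisfies
`⟨Rx, x⟩ ≥ (∫₀¹ ‖T(t)⁻¹‖⁻² dt) ‖x‖²` and is invertible, with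
`‖R⁻¹‖ ≤ (∫₀¹ ‖T(t)⁻¹‖⁻² dt)⁻¹`. -/
theorem stmt5 {H : Type*} [NormedAddCommGroup H] [InnerProductSpace ℝ H] [CompleteSpace H]
    (T : ℝ → H ≃L[ℝ] H)
    (hcont : ∀ x : H, ContinuousOn (fun t => (T t) x) (Set.Icc 0 1))
    (hbd : ∃ C : ℝ, ∀ t ∈ Set.Icc (0 : ℝ) 1,
      ‖(T t : H →L[ℝ] H)‖ + ‖((T t).symm : H →L[ℝ] H)‖ ≤ C)
    (R : H →L[ℝ] H)
    (hR : ∀ x : H, R x =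
      ∫ t in Set.Icc (0 : ℝ) 1, (T t) (ContinuousLinearMap.adjoint (T t : H →L[ℝ] H) x)) :
    (∀ x : H,
      (∫ t in Set.Icc (0 : ℝ) 1, (‖((T t).symm : H →L[ℝ] H)‖ ^ 2)⁻¹) * ‖x‖ ^ 2 ≤
        ⟪R x, x⟫_ℝ) ∧
    ∃ Rinv : H →L[ℝ] H,
      Rinv.comp R = ContinuousLinearMap.id ℝ H ∧
      R.comp Rinv = ContinuousLinearMap.id ℝ H ∧
      ‖Rinv‖ ≤ (∫ t in Set.Icc (0 : ℝ) 1, (‖((T t).symm : H →L[ℝ] H)‖ ^ 2)⁻¹)⁻¹ := by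
  rcases subsingleton_or_nontrivial H with hsub | hnt
  · -- trivial case
    have hB0 : ∀ t : ℝ, ((T t).symm : H →L[ℝ] H) = (0 : H →L[ℝ] H) := fun t =>
      ContinuousLinearMap.ext fun y => Subsingleton.elim _ _
    have hint : (∫ t in Set.Icc (0:ℝ) 1, (‖((T t).symm : H →L[ℝ] H)‖ ^ 2)⁻¹) = 0 := by
      have : (fun t : ℝ => (‖((T t).symm : H →L[ℝ] H)‖ ^ 2)⁻¹) = fun _ => 0 := by
        funext t; rw [hB0 t]; simp
      rw [this, integral_zero]
    constructor
    · intro x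
      have hx : x = 0 := Subsingleton.elim x 0
      rw [hint, hx]
      simp
    · refine ⟨0, ?_, ?_, ?_⟩
      · exact ContinuousLinearMap.ext fun y => Subsingleton.elim _ _
      · exact ContinuousLinearMap.ext fun y => Subsingleton.elim _ _
      · rw [hint]
        simp
  -- nontrivial case
  obtain ⟨C, hC⟩ := hbd
  have hC1 : ∀ t ∈ Set.Icc (0:ℝ) 1, ‖(T t : H →L[ℝ] H)‖ ≤ C := fun t ht =>
    le_trans (le_add_of_nonneg_right (norm_nonneg _)) (hC t ht)
  have hC2 : ∀ t ∈ Set.Icc (0:ℝ) 1, ‖((T t).symm : H →L[ℝ] H)‖ ≤ C := fun t ht =>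
    le_trans (le_add_of_nonneg_left (norm_nonneg _)) (hC t ht)
  haveI : Nonempty (Metric.sphere (0:H) 1) := sphere_ne
  have hBpos : ∀ t : ℝ, 0 < ‖((T t).symm : H →L[ℝ] H)‖ := fun t => symm_norm_pos (T t)
  have hCpos : 0 < C := lt_of_lt_of_le (hBpos 0) (hC2 0 ⟨le_refl (0:ℝ), zero_le_one⟩)
  set μ := volume.restrict (Set.Icc (0:ℝ) 1) with hμdef
  haveI hfin : IsFiniteMeasure μ := by
    constructor
    rw [hμdef, Measure.restrict_apply_univ, Real.volume_Icc]
    exact ENNReal.ofReal_lt_top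
  set mbar : ℝ → ℝ := fun t => ⨅ z : Metric.sphere (0:H) 1,
    ‖(T (cl t) : H →L[ℝ] H) (z : H)‖ with hmbardef
  have hmbar_meas : Measurable mbar := mbar_measurable T hcont
  have hmbar_eq : ∀ t : ℝ, mbar t = ‖((T (cl t)).symm : H →L[ℝ] H)‖⁻¹ := fun t =>
    inv_norm_eq (T (cl t))
  have hintegrand : ∀ t ∈ Set.Icc (0:ℝ) 1,
      (‖((T t).symm : H →L[ℝ] H)‖ ^ 2)⁻¹ = mbar t ^ 2 := by
    intro t ht
    rw [hmbar_eq t, cl_eq ht, ← inv_pow]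
  have hmbar_nonneg : ∀ t : ℝ, 0 ≤ mbar t := fun t => le_ciInf fun z => norm_nonneg _
  have hmbar_le : ∀ t : ℝ, mbar t ≤ C := by
    intro t
    obtain ⟨z⟩ := (inferInstance : Nonempty (Metric.sphere (0:H) 1))
    have h1 : mbar t ≤ ‖(T (cl t) : H →L[ℝ] H) (z : H)‖ := by
      refine ciInf_le ⟨0, ?_⟩ z
      rintro s ⟨w, rfl⟩
      exact norm_nonneg _
    refine h1.trans ?_
    have h2 : ‖(T (cl t) : H →L[ℝ] H) (z : H)‖ ≤ ‖(T (cl t) : H →L[ℝ] H)‖ * ‖(z : H)‖ :=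
      ContinuousLinearMap.le_opNorm _ _
    rw [norm_coe_sphere, mul_one] at h2
    exact h2.trans (hC1 (cl t) (cl_mem t))
  have hmbar_lb : ∀ t ∈ Set.Icc (0:ℝ) 1, C⁻¹ ≤ mbar t := by
    intro t ht
    rw [hmbar_eq t, cl_eq ht]
    gcongr
    · exact hBpos t
    · exact hC2 t ht
  -- integrability of the scalar integrand
  have haeeq : (fun t : ℝ => (‖((T t).symm : H →L[ℝ] H)‖ ^ 2)⁻¹)
      =ᵐ[μ] (fun t => mbar t ^ 2) := by
    filter_upwards [ae_restrict_mem measurableSet_Icc] with t ht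
    exact hintegrand t ht
  have hmbar2_int : Integrable (fun t => mbar t ^ 2) μ := by
    refine Integrable.mono' (integrable_const (C ^ 2)) ?_ ?_
    · exact ((hmbar_meas.pow_const 2).aestronglyMeasurable)
    · refine Eventually.of_forall fun t => ?_
      rw [Real.norm_eq_abs, abs_of_nonneg (by positivity)]
      exact pow_le_pow_left₀ (hmbar_nonneg t) (hmbar_le t) 2
  have hi_int : Integrable (fun t : ℝ => (‖((T t).symm : H →L[ℝ] H)‖ ^ 2)⁻¹) μ :=
    hmbar2_int.congr haeeq.symm
  have hc_pos : 0 < ∫ t in Set.Icc (0:ℝ) 1, (‖((T t).symm : H →L[ℝ] H)‖ ^ 2)⁻¹ := by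
    have hlb : ∀ t ∈ Set.Icc (0:ℝ) 1, (C ^ 2)⁻¹ ≤ (‖((T t).symm : H →L[ℝ] H)‖ ^ 2)⁻¹ := by
      intro t ht
      rw [hintegrand t ht, ← inv_pow]
      exact pow_le_pow_left₀ (by positivity) (hmbar_lb t ht) 2
    have h1 : (∫ _ in Set.Icc (0:ℝ) 1, (C ^ 2)⁻¹) ≤
        ∫ t in Set.Icc (0:ℝ) 1, (‖((T t).symm : H →L[ℝ] H)‖ ^ 2)⁻¹ :=
      setIntegral_mono_on (integrable_const _) hi_int measurableSet_Icc hlb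
    have h2 : (∫ _ in Set.Icc (0:ℝ) 1, (C ^ 2)⁻¹) = (C ^ 2)⁻¹ := by
      rw [setIntegral_const, Real.volume_real_Icc]
      norm_num
    rw [h2] at h1
    exact lt_of_lt_of_le (by positivity) h1
  -- the key inequality
  have key : ∀ x : H,
      (∫ t in Set.Icc (0 : ℝ) 1, (‖((T t).symm : H →L[ℝ] H)‖ ^ 2)⁻¹) * ‖x‖ ^ 2 ≤
        ⟪R x, x⟫_ℝ := by
    intro x
    obtain ⟨hgm, hfm⟩ := aesm_pair T hcont x
    have hgbd : ∀ t ∈ Set.Icc (0:ℝ) 1,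
        ‖ContinuousLinearMap.adjoint (T t : H →L[ℝ] H) x‖ ≤ C * ‖x‖ := by
      intro t ht
      calc ‖ContinuousLinearMap.adjoint (T t : H →L[ℝ] H) x‖
          ≤ ‖ContinuousLinearMap.adjoint (T t : H →L[ℝ] H)‖ * ‖x‖ :=
            ContinuousLinearMap.le_opNorm _ _
        _ ≤ C * ‖x‖ := by
            have hadj : ‖ContinuousLinearMap.adjoint (T t : H →L[ℝ] H)‖
                = ‖(T t : H →L[ℝ] H)‖ := ContinuousLinearMap.adjoint.norm_map _
            rw [hadj]
            exact mul_le_mul_of_nonneg_right (hC1 t ht) (norm_nonneg x)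
    have hf_int : Integrable
        (fun t => (T t) (ContinuousLinearMap.adjoint (T t : H →L[ℝ] H) x)) μ := by
      refine Integrable.mono' (integrable_const (C * (C * ‖x‖))) hfm ?_
      filter_upwards [ae_restrict_mem measurableSet_Icc] with t ht
      calc ‖(T t) (ContinuousLinearMap.adjoint (T t : H →L[ℝ] H) x)‖
          = ‖(T t : H →L[ℝ] H) (ContinuousLinearMap.adjoint (T t : H →L[ℝ] H) x)‖ := rfl
        _ ≤ ‖(T t : H →L[ℝ] H)‖ * ‖ContinuousLinearMap.adjoint (T t : H →L[ℝ] H) x‖ :=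
            ContinuousLinearMap.le_opNorm _ _
        _ ≤ C * (C * ‖x‖) :=
            mul_le_mul (hC1 t ht) (hgbd t ht) (norm_nonneg _) hCpos.le
    have hpt : ∀ t : ℝ, ⟪x, (T t) (ContinuousLinearMap.adjoint (T t : H →L[ℝ] H) x)⟫_ℝ
        = ‖ContinuousLinearMap.adjoint (T t : H →L[ℝ] H) x‖ ^ 2 := by
      intro t
      rw [show ((T t) (ContinuousLinearMap.adjoint (T t : H →L[ℝ] H) x))
          = (T t : H →L[ℝ] H) (ContinuousLinearMap.adjoint (T t : H →L[ℝ] H) x) from rfl]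
      rw [← ContinuousLinearMap.adjoint_inner_left (T t : H →L[ℝ] H)
        (ContinuousLinearMap.adjoint (T t : H →L[ℝ] H) x) x]
      exact real_inner_self_eq_norm_sq _
    have hRx : ⟪R x, x⟫_ℝ = ∫ t in Set.Icc (0:ℝ) 1,
        ‖ContinuousLinearMap.adjoint (T t : H →L[ℝ] H) x‖ ^ 2 := by
      rw [real_inner_comm, hR x, ← integral_inner hf_int x]
      exact integral_congr_ae (Eventually.of_forall fun t => hpt t)
    have hg2_int : Integrable
        (fun t => ‖ContinuousLinearMap.adjoint (T t : H →L[ℝ] H) x‖ ^ 2) μ := by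
      refine Integrable.mono' (integrable_const ((C * ‖x‖) ^ 2)) ?_ ?_
      · exact (continuous_pow 2).comp_aestronglyMeasurable hgm.norm
      · filter_upwards [ae_restrict_mem measurableSet_Icc] with t ht
        rw [Real.norm_eq_abs, abs_of_nonneg (by positivity)]
        exact pow_le_pow_left₀ (norm_nonneg _) (hgbd t ht) 2
    have hpoint : ∀ t ∈ Set.Icc (0:ℝ) 1,
        (‖((T t).symm : H →L[ℝ] H)‖ ^ 2)⁻¹ * ‖x‖ ^ 2 ≤
          ‖ContinuousLinearMap.adjoint (T t : H →L[ℝ] H) x‖ ^ 2 := by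
      intro t ht
      have hcomp : (T t : H →L[ℝ] H).comp ((T t).symm : H →L[ℝ] H)
          = ContinuousLinearMap.id ℝ H := by
        ext z
        simp
      have h2 : ContinuousLinearMap.adjoint ((T t).symm : H →L[ℝ] H)
          (ContinuousLinearMap.adjoint (T t : H →L[ℝ] H) x) = x := by
        have h3 := ContinuousLinearMap.adjoint_comp (T t : H →L[ℝ] H)
          ((T t).symm : H →L[ℝ] H)
        rw [hcomp, ContinuousLinearMap.adjoint_id] at h3
        have h4 : ((ContinuousLinearMap.adjoint ((T t).symm : H →L[ℝ] H)).comp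
            (ContinuousLinearMap.adjoint (T t : H →L[ℝ] H))) x
            = (ContinuousLinearMap.id ℝ H) x := by rw [← h3]
        simpa using h4
      have hxle : ‖x‖ ≤ ‖((T t).symm : H →L[ℝ] H)‖ *
          ‖ContinuousLinearMap.adjoint (T t : H →L[ℝ] H) x‖ := by
        conv_lhs => rw [← h2]
        refine le_trans (ContinuousLinearMap.le_opNorm _ _) ?_
        rw [ContinuousLinearMap.adjoint.norm_map]
      have hb2 : (0:ℝ) < ‖((T t).symm : H →L[ℝ] H)‖ ^ 2 := pow_pos (hBpos t) 2
      rw [inv_mul_le_iff₀ hb2]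
      have h5 : ‖x‖ ^ 2 ≤ (‖((T t).symm : H →L[ℝ] H)‖ *
          ‖ContinuousLinearMap.adjoint (T t : H →L[ℝ] H) x‖) ^ 2 :=
        pow_le_pow_left₀ (norm_nonneg _) hxle 2
      have h6 : (‖((T t).symm : H →L[ℝ] H)‖ *
          ‖ContinuousLinearMap.adjoint (T t : H →L[ℝ] H) x‖) ^ 2
          = ‖((T t).symm : H →L[ℝ] H)‖ ^ 2 *
            ‖ContinuousLinearMap.adjoint (T t : H →L[ℝ] H) x‖ ^ 2 := by ring
      linarith
    have hmono : (∫ t in Set.Icc (0:ℝ) 1,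
        (‖((T t).symm : H →L[ℝ] H)‖ ^ 2)⁻¹ * ‖x‖ ^ 2) ≤
        ∫ t in Set.Icc (0:ℝ) 1,
          ‖ContinuousLinearMap.adjoint (T t : H →L[ℝ] H) x‖ ^ 2 :=
      setIntegral_mono_on (hi_int.mul_const _) hg2_int measurableSet_Icc hpoint
    rw [hRx]
    calc (∫ t in Set.Icc (0 : ℝ) 1, (‖((T t).symm : H →L[ℝ] H)‖ ^ 2)⁻¹) * ‖x‖ ^ 2
        = ∫ t in Set.Icc (0:ℝ) 1, (‖((T t).symm : H →L[ℝ] H)‖ ^ 2)⁻¹ * ‖x‖ ^ 2 :=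
          (integral_mul_const _ _).symm
      _ ≤ _ := hmono
  refine ⟨key, ?_⟩
  -- Lax-Milgram
  set Bform : H →L[ℝ] H →L[ℝ] ℝ :=
    LinearMap.mkContinuous₂
      (LinearMap.mk₂ ℝ (fun u v => ⟪R u, v⟫_ℝ)
        (fun u u' v => by simp [inner_add_left])
        (fun a u v => by simp [real_inner_smul_left])
        (fun u v v' => by simp [inner_add_right])
        (fun a u v => by simp [real_inner_smul_right]))
      ‖R‖ (fun u v => by
        rw [LinearMap.mk₂_apply, Real.norm_eq_abs]
        calc |⟪R u, v⟫_ℝ| ≤ ‖R u‖ * ‖v‖ := abs_real_inner_le_norm _ _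
          _ ≤ ‖R‖ * ‖u‖ * ‖v‖ :=
            mul_le_mul_of_nonneg_right (R.le_opNorm u) (norm_nonneg v)) with hBform
  have hBapp : ∀ u v : H, Bform u v = ⟪R u, v⟫_ℝ := fun u v => rfl
  have hcoerc : IsCoercive Bform := by
    refine ⟨∫ t in Set.Icc (0 : ℝ) 1, (‖((T t).symm : H →L[ℝ] H)‖ ^ 2)⁻¹, hc_pos, fun u => ?_⟩
    rw [hBapp]
    calc (∫ t in Set.Icc (0 : ℝ) 1, (‖((T t).symm : H →L[ℝ] H)‖ ^ 2)⁻¹) * ‖u‖ * ‖u‖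
        = (∫ t in Set.Icc (0 : ℝ) 1, (‖((T t).symm : H →L[ℝ] H)‖ ^ 2)⁻¹) * ‖u‖ ^ 2 := by ring
      _ ≤ ⟪R u, u⟫_ℝ := key u
  set E := hcoerc.continuousLinearEquivOfBilin with hE
  have hER : ∀ v : H, E v = R v := by
    intro v
    refine ext_inner_right ℝ fun w => ?_
    rw [hcoerc.continuousLinearEquivOfBilin_apply v w, hBapp]
  refine ⟨(E.symm : H →L[ℝ] H), ?_, ?_, ?_⟩
  · ext v
    simp only [ContinuousLinearMap.coe_comp', Function.comp_apply,
      ContinuousLinearMap.coe_id', id_eq, ContinuousLinearEquiv.coe_coe]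
    rw [← hER v]
    exact E.symm_apply_apply v
  · ext v
    simp only [ContinuousLinearMap.coe_comp', Function.comp_apply,
      ContinuousLinearMap.coe_id', id_eq, ContinuousLinearEquiv.coe_coe]
    rw [← hER (E.symm v)]
    exact E.apply_symm_apply v
  · refine ContinuousLinearMap.opNorm_le_bound _ (inv_nonneg.2 hc_pos.le) fun y => ?_
    simp only [ContinuousLinearEquiv.coe_coe]
    set u := E.symm y with hu
    have hEu : E u = y := E.apply_symm_apply y
    have h1 : (∫ t in Set.Icc (0 : ℝ) 1, (‖((T t).symm : H →L[ℝ] H)‖ ^ 2)⁻¹) * ‖u‖ ^ 2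
        ≤ ⟪y, u⟫_ℝ := by
      have := key u
      rwa [← hER u, hEu] at this
    have h2 : ⟪y, u⟫_ℝ ≤ ‖y‖ * ‖u‖ := real_inner_le_norm _ _
    set c := ∫ t in Set.Icc (0 : ℝ) 1, (‖((T t).symm : H →L[ℝ] H)‖ ^ 2)⁻¹ with hcdef
    rcases (norm_nonneg u).lt_or_eq with hu0 | hu0
    · have h3 : c * ‖u‖ ≤ ‖y‖ := by
        have h4 : c * ‖u‖ * ‖u‖ ≤ ‖y‖ * ‖u‖ := by
          calc c * ‖u‖ * ‖u‖ = c * ‖u‖ ^ 2 := by ring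
            _ ≤ ⟪y, u⟫_ℝ := h1
            _ ≤ ‖y‖ * ‖u‖ := h2
        exact le_of_mul_le_mul_right h4 hu0
      calc ‖u‖ = c⁻¹ * (c * ‖u‖) := by
            rw [← mul_assoc, inv_mul_cancel₀ hc_pos.ne', one_mul]
        _ ≤ c⁻¹ * ‖y‖ := mul_le_mul_of_nonneg_left h3 (inv_nonneg.2 hc_pos.le)
    · rw [← hu0]
      exact mul_nonneg (inv_nonneg.2 hc_pos.le) (norm_nonneg y)
end

section
/- Let H be a real Hilbert space and let t ↦ A(t) be a map from [0,1] to the bounded self-adjoint operators on H such that t ↦ A(t)x is continuous for every x ∈ H and there exist constants 0 < c ≤ C with c‖x‖² ≤ ⟨A(t)x, x⟩ ≤ C‖x‖² for all t and x (so each A(t) is invertible). Let a, b ∈ H. Then the operator R = ∫₀¹ A(t)⁻¹ dt is bounded, self-adjoint and invertible, and the infimum of ∫₀¹ ⟨A(t) ṁ(t), ṁ(t)⟩ dt over all absolutely continuous curves m : [0,1] → H with derivative ṁ ∈ L²([0,1]; H), m(0) = a and m(1) = b, equals ⟨R⁻¹(b − a), b − a⟩; moreover the infimum is attained exactly by the curve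 with ṁ(t) = A(t)⁻¹ R⁻¹(b − a), i.e. the curve along which A(t)ṁ(t) is constant in time. -/
open scoped BigOperators ENNReal InnerProductSpace
open MeasureTheory

lemma stmt6_norm_apply_le {H : Type*} [NormedAddCommGroup H] [InnerProductSpace ℝ H]
    (T : H →L[ℝ] H) (hT : ∀ x y : H, ⟪T x, y⟫_ℝ = ⟪x, T y⟫_ℝ)
    {C : ℝ} (hC : 0 ≤ C)
    (h0 : ∀ x : H, 0 ≤ ⟪T x, x⟫_ℝ) (hub : ∀ x : H, ⟪T x, x⟫_ℝ ≤ C * ‖x‖ ^ 2)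
    (x : H) : ‖T x‖ ≤ C * ‖x‖ := by
  have key : ∀ y : H, ⟪T x, y⟫_ℝ ≤ C / 2 * (‖x‖ ^ 2 + ‖y‖ ^ 2) := by
    intro y
    have h1 : ⟪T y, x⟫_ℝ = ⟪T x, y⟫_ℝ := by rw [hT y x, real_inner_comm]
    have pol : 4 * ⟪T x, y⟫_ℝ = ⟪T (x + y), x + y⟫_ℝ - ⟪T (x - y), x - y⟫_ℝ := by
      simp only [map_add, map_sub, inner_add_left, inner_add_right, inner_sub_left,
        inner_sub_right]
      rw [h1]; ring
    have h2 : ⟪T (x + y), x + y⟫_ℝ ≤ C * ‖x + y‖ ^ 2 := hub _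
    have h3 : 0 ≤ ⟪T (x - y), x - y⟫_ℝ := h0 _
    have h4 : ‖x + y‖ ^ 2 ≤ 2 * (‖x‖ ^ 2 + ‖y‖ ^ 2) := by
      have h5 := norm_add_sq_real x y
      have h6 := real_inner_le_norm x y
      nlinarith [sq_nonneg (‖x‖ - ‖y‖)]
    nlinarith
  by_cases hTx : T x = 0
  · simpa [hTx] using mul_nonneg hC (norm_nonneg x)
  · have hTxn : 0 < ‖T x‖ := norm_pos_iff.mpr hTx
    have hx : x ≠ 0 := by rintro rfl; simp at hTx
    have hxn : 0 < ‖x‖ := norm_pos_iff.mpr hx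
    have := key ((‖x‖ / ‖T x‖) • T x)
    rw [real_inner_smul_right, real_inner_self_eq_norm_sq] at this
    have hy : ‖(‖x‖ / ‖T x‖) • T x‖ = ‖x‖ := by
      rw [norm_smul, Real.norm_eq_abs, abs_of_nonneg (by positivity)]
      field_simp
    rw [hy] at this
    have h7 : ‖x‖ * ‖T x‖ ≤ C * ‖x‖ ^ 2 := by
      have : ‖x‖ / ‖T x‖ * ‖T x‖ ^ 2 = ‖x‖ * ‖T x‖ := by field_simp
      nlinarith [key ((‖x‖ / ‖T x‖) • T x)]
    nlinarith

lemma stmt6_aesm_apply {H : Type*} [NormedAddCommGroup H] [InnerProductSpace ℝ H]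
    {μ : Measure ℝ} (A : ℝ → H →L[ℝ] H)
    (hA : ∀ x : H, AEStronglyMeasurable (fun t => A t x) μ)
    {f : ℝ → H} (hf : AEStronglyMeasurable f μ) :
    AEStronglyMeasurable (fun t => A t (f t)) μ := by
  obtain ⟨g, hg, hfg⟩ := hf
  have hsimple : ∀ s : SimpleFunc ℝ H, AEStronglyMeasurable (fun t => A t (s t)) μ := by
    intro s
    refine MeasureTheory.SimpleFunc.induction (motive := fun s : SimpleFunc ℝ H =>
        AEStronglyMeasurable (fun t => A t (s t)) μ) ?_ ?_ s
    · intro c u hu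
      have : (fun t => A t ((SimpleFunc.piecewise u hu (SimpleFunc.const ℝ c)
          (SimpleFunc.const ℝ 0)) t)) = fun t => Set.indicator u (fun t => A t c) t := by
        funext t
        simp only [SimpleFunc.coe_piecewise, SimpleFunc.coe_const, Set.piecewise]
        by_cases ht : t ∈ u
        · simp [Set.indicator_of_mem ht, ht]
        · simp [Set.indicator_of_notMem ht, ht]
      rw [this]
      exact (hA c).indicator hu
    · intro s₁ s₂ _ h1 h2
      have : (fun t => A t ((s₁ + s₂) t)) = fun t => A t (s₁ t) + A t (s₂ t) := by
        funext t; simp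
      rw [this]
      exact h1.add h2
  have hgm : AEStronglyMeasurable (fun t => A t (g t)) μ := by
    refine aestronglyMeasurable_of_tendsto_ae Filter.atTop
      (f := fun n t => A t ((hg.approx n) t)) (fun n => hsimple _) ?_
    filter_upwards with t
    exact ((A t).continuous.tendsto _).comp (hg.tendsto_approx t)
  exact hgm.congr (by filter_upwards [hfg] with t ht using by rw [ht])

/-- Reduction of the quadratic variational problem
`inf ∫₀¹ ⟨A(t) ṁ(t), ṁ(t)⟩ dt` over absolutely continuous curves `m` (with `ṁ ∈ L²`, `m(0) = a`,
`m(1) = b`, the curve being parametrized by its derivative `m'` via `m(t) = a + ∫₀ᵗ m'`):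
with `R = ∫₀¹ A(t)⁻¹ dt`, the operator `R` is self-adjoint and invertible, the infimum equals
`⟨R⁻¹(b − a), b − a⟩`, and it is attained exactly at `m'(t) = A(t)⁻¹ R⁻¹ (b − a)`
(the curve along which `A(t) ṁ(t)` is constant). -/
theorem stmt6 {H : Type*} [NormedAddCommGroup H] [InnerProductSpace ℝ H] [CompleteSpace H]
    (A B : ℝ → H →L[ℝ] H)
    (hsa : ∀ t ∈ Set.Icc (0 : ℝ) 1, IsSelfAdjoint (A t))
    (hcont : ∀ x : H, ContinuousOn (fun t => A t x) (Set.Icc 0 1))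
    (c C : ℝ) (hc : 0 < c) (hcC : c ≤ C)
    (hlb : ∀ t ∈ Set.Icc (0 : ℝ) 1, ∀ x : H, c * ‖x‖ ^ 2 ≤ ⟪A t x, x⟫_ℝ)
    (hub : ∀ t ∈ Set.Icc (0 : ℝ) 1, ∀ x : H, ⟪A t x, x⟫_ℝ ≤ C * ‖x‖ ^ 2)
    (hB : ∀ t ∈ Set.Icc (0 : ℝ) 1,
      (A t).comp (B t) = ContinuousLinearMap.id ℝ H ∧
      (B t).comp (A t) = ContinuousLinearMap.id ℝ H)
    (a b : H)
    (R : H →L[ℝ] H) (hR : ∀ x : H, R x = ∫ t in Set.Icc (0 : ℝ) 1, B t x) :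
    IsSelfAdjoint R ∧
    ∃ Rinv : H →L[ℝ] H,
      Rinv.comp R = ContinuousLinearMap.id ℝ H ∧
      R.comp Rinv = ContinuousLinearMap.id ℝ H ∧
      IsLeast
        {E : ℝ | ∃ m' : ℝ → H,
          MemLp m' 2 (volume.restrict (Set.Icc (0 : ℝ) 1)) ∧
          a + (∫ s in Set.Icc (0 : ℝ) 1, m' s) = b ∧
          E = ∫ t in Set.Icc (0 : ℝ) 1, ⟪A t (m' t), m' t⟫_ℝ}
        ⟪Rinv (b - a), b - a⟫_ℝ ∧
      ∀ m' : ℝ → H,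
        MemLp m' 2 (volume.restrict (Set.Icc (0 : ℝ) 1)) →
        a + (∫ s in Set.Icc (0 : ℝ) 1, m' s) = b →
        ((∫ t in Set.Icc (0 : ℝ) 1, ⟪A t (m' t), m' t⟫_ℝ) = ⟪Rinv (b - a), b - a⟫_ℝ ↔
          m' =ᵐ[volume.restrict (Set.Icc (0 : ℝ) 1)] fun t => B t (Rinv (b - a))) := by
  have hI : MeasurableSet (Set.Icc (0 : ℝ) 1) := measurableSet_Icc
  have hC0 : 0 < C := lt_of_lt_of_le hc hcC
  haveI : IsFiniteMeasure (volume.restrict (Set.Icc (0 : ℝ) 1)) := by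
    constructor
    rw [Measure.restrict_apply_univ, Real.volume_Icc]
    exact ENNReal.ofReal_lt_top
  have hvol : (volume (Set.Icc (0 : ℝ) 1)).toReal = 1 := by
    rw [Real.volume_Icc]; norm_num
  -- basic algebraic facts
  have hAB : ∀ t ∈ Set.Icc (0 : ℝ) 1, ∀ y : H, A t (B t y) = y := fun t ht y =>
    ContinuousLinearMap.ext_iff.mp (hB t ht).1 y
  have hBA : ∀ t ∈ Set.Icc (0 : ℝ) 1, ∀ y : H, B t (A t y) = y := fun t ht y =>
    ContinuousLinearMap.ext_iff.mp (hB t ht).2 y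
  have hAsym : ∀ t ∈ Set.Icc (0 : ℝ) 1, ∀ x y : H, ⟪A t x, y⟫_ℝ = ⟪x, A t y⟫_ℝ := fun t ht =>
    fun x y => (ContinuousLinearMap.isSelfAdjoint_iff_isSymmetric.mp (hsa t ht)) x y
  have hBnorm : ∀ t ∈ Set.Icc (0 : ℝ) 1, ∀ y : H, ‖B t y‖ ≤ c⁻¹ * ‖y‖ := by
    intro t ht y
    have h1 := hlb t ht (B t y)
    rw [hAB t ht y] at h1
    by_cases h : B t y = 0
    · simp [h]; positivity
    · have hn : 0 < ‖B t y‖ := norm_pos_iff.mpr h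
      have h2 : ⟪y, B t y⟫_ℝ ≤ ‖y‖ * ‖B t y‖ := real_inner_le_norm _ _
      have h3 : c * ‖B t y‖ ≤ ‖y‖ := by nlinarith
      rw [← mul_le_mul_iff_right₀ hc, ← mul_assoc, mul_inv_cancel₀ (ne_of_gt hc), one_mul]
      exact h3
  have hAnorm : ∀ t ∈ Set.Icc (0 : ℝ) 1, ∀ x : H, ‖A t x‖ ≤ C * ‖x‖ := fun t ht =>
    stmt6_norm_apply_le (A t) (hAsym t ht) hC0.le
      (fun x => le_trans (by positivity) (hlb t ht x)) (hub t ht)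
  have hBsym : ∀ t ∈ Set.Icc (0 : ℝ) 1, ∀ y z : H, ⟪B t y, z⟫_ℝ = ⟪y, B t z⟫_ℝ := by
    intro t ht y z
    calc ⟪B t y, z⟫_ℝ = ⟪B t y, A t (B t z)⟫_ℝ := by rw [hAB t ht z]
      _ = ⟪A t (B t y), B t z⟫_ℝ := (hAsym t ht _ _).symm
      _ = ⟪y, B t z⟫_ℝ := by rw [hAB t ht y]
  have hBlb : ∀ t ∈ Set.Icc (0 : ℝ) 1, ∀ y : H, c / C ^ 2 * ‖y‖ ^ 2 ≤ ⟪B t y, y⟫_ℝ := by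
    intro t ht y
    have h1 := hlb t ht (B t y)
    have h2 : ⟪A t (B t y), B t y⟫_ℝ = ⟪B t y, y⟫_ℝ := by
      rw [hAB t ht y]; exact real_inner_comm _ _
    rw [h2] at h1
    have h3 : ‖y‖ ≤ C * ‖B t y‖ := by
      conv_lhs => rw [← hAB t ht y]
      exact hAnorm t ht _
    rw [div_mul_eq_mul_div, div_le_iff₀ (by positivity)]
    nlinarith [mul_self_le_mul_self (norm_nonneg y) h3, norm_nonneg (B t y), sq_nonneg ‖B t y‖]
  have hBcont : ∀ x : H, ContinuousOn (fun t => B t x) (Set.Icc (0 : ℝ) 1) := by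
    intro x s hs
    have key : ∀ t ∈ Set.Icc (0 : ℝ) 1,
        ‖B t x - B s x‖ ≤ c⁻¹ * ‖A s (B s x) - A t (B s x)‖ := by
      intro t ht
      have heq : B t x - B s x = B t (A s (B s x) - A t (B s x)) := by
        rw [map_sub, hBA t ht, hAB s hs x]
      rw [heq]
      exact hBnorm t ht _
    have hz : Filter.Tendsto (fun t => A t (B s x)) (nhdsWithin s (Set.Icc (0 : ℝ) 1))
        (nhds (A s (B s x))) := hcont (B s x) s hs
    have h0 : Filter.Tendsto (fun t => c⁻¹ * ‖A s (B s x) - A t (B s x)‖)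
        (nhdsWithin s (Set.Icc (0 : ℝ) 1)) (nhds 0) := by
      have h1 : Filter.Tendsto (fun t => A s (B s x) - A t (B s x))
          (nhdsWithin s (Set.Icc (0 : ℝ) 1)) (nhds (A s (B s x) - A s (B s x))) :=
        Filter.Tendsto.sub tendsto_const_nhds hz
      have := (h1.norm.const_mul c⁻¹)
      simpa using this
    have : Filter.Tendsto (fun t => B t x) (nhdsWithin s (Set.Icc (0 : ℝ) 1))
        (nhds (B s x)) := by
      rw [tendsto_iff_norm_sub_tendsto_zero]
      refine squeeze_zero' (Filter.Eventually.of_forall fun t => norm_nonneg _) ?_ h0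
      filter_upwards [self_mem_nhdsWithin] with t ht using key t ht
    exact this
  have hInt : ∀ x : H, Integrable (fun t => B t x)
      (volume.restrict (Set.Icc (0 : ℝ) 1)) := fun x =>
    (hBcont x).integrableOn_compact isCompact_Icc
  -- R is self-adjoint
  have hRsym : ∀ x y : H, ⟪R x, y⟫_ℝ = ⟪x, R y⟫_ℝ := by
    intro x y
    calc ⟪R x, y⟫_ℝ = ⟪y, R x⟫_ℝ := real_inner_comm _ _
      _ = ∫ t in Set.Icc (0 : ℝ) 1, ⟪y, B t x⟫_ℝ := by
          rw [hR x]; exact (integral_inner (𝕜 := ℝ) (hInt x) y).symm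
      _ = ∫ t in Set.Icc (0 : ℝ) 1, ⟪x, B t y⟫_ℝ := by
          refine setIntegral_congr_fun hI fun t ht => ?_
          rw [← hBsym t ht y x]; exact real_inner_comm _ _
      _ = ⟪x, R y⟫_ℝ := by rw [hR y]; exact integral_inner (𝕜 := ℝ) (hInt y) x
  have hRsa : IsSelfAdjoint R :=
    ContinuousLinearMap.isSelfAdjoint_iff_isSymmetric.mpr fun x y => hRsym x y
  -- coercivity of R
  have hRquad : ∀ x : H, ⟪R x, x⟫_ℝ = ∫ t in Set.Icc (0 : ℝ) 1, ⟪B t x, x⟫_ℝ := by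
    intro x
    rw [real_inner_comm, hR x, ← integral_inner (𝕜 := ℝ) (hInt x) x]
    exact setIntegral_congr_fun hI fun t ht => real_inner_comm _ _
  have hRlb : ∀ x : H, c / C ^ 2 * ‖x‖ ^ 2 ≤ ⟪R x, x⟫_ℝ := by
    intro x
    rw [hRquad x]
    have hint : IntegrableOn (fun t => ⟪B t x, x⟫_ℝ) (Set.Icc (0 : ℝ) 1) volume :=
      ((hBcont x).inner continuousOn_const).integrableOn_compact isCompact_Icc
    have := setIntegral_ge_of_const_le (c := c / C ^ 2 * ‖x‖ ^ 2) hI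
      (by rw [Real.volume_Icc]; exact ENNReal.ofReal_ne_top)
      (fun t ht => hBlb t ht x) hint
    rwa [measureReal_def, hvol, smul_eq_mul, one_mul] at this
  have hcoer : IsCoercive ((innerSL ℝ).comp R) := by
    refine ⟨c / C ^ 2, by positivity, fun u => ?_⟩
    have := hRlb u
    have h2 : ((innerSL ℝ).comp R) u u = ⟪R u, u⟫_ℝ := rfl
    rw [h2]
    nlinarith [sq_nonneg ‖u‖]
  set E := hcoer.continuousLinearEquivOfBilin with hEdef
  have hEap : ∀ v : H, E v = R v := by
    intro v
    refine ext_inner_right ℝ fun w => ?_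
    exact hcoer.continuousLinearEquivOfBilin_apply v w
  set Rinv : H →L[ℝ] H := (E.symm : H →L[ℝ] H) with hRinvdef
  have hRinvR : Rinv.comp R = ContinuousLinearMap.id ℝ H := by
    ext x
    show E.symm (R x) = x
    rw [← hEap x]; exact E.symm_apply_apply x
  have hRRinv : R.comp Rinv = ContinuousLinearMap.id ℝ H := by
    ext x
    show R (E.symm x) = x
    rw [← hEap (E.symm x)]; exact E.apply_symm_apply x
  have hRq : R (Rinv (b - a)) = b - a := ContinuousLinearMap.ext_iff.mp hRRinv (b - a)
  set q : H := Rinv (b - a) with hqdef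
  set ustar : ℝ → H := fun t => B t q with hustardef
  have hu_int : Integrable ustar (volume.restrict (Set.Icc (0 : ℝ) 1)) := hInt q
  have hu_mem : MemLp ustar 2 (volume.restrict (Set.Icc (0 : ℝ) 1)) := by
    refine MemLp.of_bound ((hBcont q).aestronglyMeasurable hI) (c⁻¹ * ‖q‖) ?_
    exact (ae_restrict_iff' hI).mpr (Filter.Eventually.of_forall fun t ht => hBnorm t ht q)
  have hu_sum : (∫ s in Set.Icc (0 : ℝ) 1, ustar s) = b - a := by
    rw [← hR q, hRq]
  have hu_end : a + (∫ s in Set.Icc (0 : ℝ) 1, ustar s) = b := by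
    rw [hu_sum]; abel
  have hAaesm : ∀ x : H, AEStronglyMeasurable (fun t => A t x)
      (volume.restrict (Set.Icc (0 : ℝ) 1)) := fun x =>
    (hcont x).aestronglyMeasurable hI
  -- the key decomposition
  have key : ∀ m' : ℝ → H, MemLp m' 2 (volume.restrict (Set.Icc (0 : ℝ) 1)) →
      a + (∫ s in Set.Icc (0 : ℝ) 1, m' s) = b →
      ∃ D : ℝ, (∫ t in Set.Icc (0 : ℝ) 1, ⟪A t (m' t), m' t⟫_ℝ) = ⟪q, b - a⟫_ℝ + D ∧
        0 ≤ D ∧ (D = 0 ↔ m' =ᵐ[volume.restrict (Set.Icc (0 : ℝ) 1)] ustar) := by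
    intro m' hm' hend
    set w : ℝ → H := fun t => m' t - ustar t with hwdef
    have hm'int : Integrable m' (volume.restrict (Set.Icc (0 : ℝ) 1)) :=
      hm'.integrable one_le_two
    have hwmem : MemLp w 2 (volume.restrict (Set.Icc (0 : ℝ) 1)) := hm'.sub hu_mem
    have hwint : Integrable w (volume.restrict (Set.Icc (0 : ℝ) 1)) := hm'int.sub hu_int
    have hintm' : (∫ s in Set.Icc (0 : ℝ) 1, m' s) = b - a := by
      rw [← hend]; abel
    have hwzero : (∫ t in Set.Icc (0 : ℝ) 1, w t) = 0 := by
      have : (∫ t in Set.Icc (0 : ℝ) 1, w t) =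
          (∫ t in Set.Icc (0 : ℝ) 1, m' t) - ∫ t in Set.Icc (0 : ℝ) 1, ustar t :=
        integral_sub hm'int hu_int
      rw [this, hintm', hu_sum, sub_self]
    have hwaesm : AEStronglyMeasurable w (volume.restrict (Set.Icc (0 : ℝ) 1)) :=
      hwmem.aestronglyMeasurable
    have hAw : AEStronglyMeasurable (fun t => A t (w t))
        (volume.restrict (Set.Icc (0 : ℝ) 1)) := stmt6_aesm_apply A hAaesm hwaesm
    set f3 : ℝ → ℝ := fun t => ⟪A t (w t), w t⟫_ℝ with hf3def
    have hf3m : AEStronglyMeasurable f3 (volume.restrict (Set.Icc (0 : ℝ) 1)) :=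
      hAw.inner hwaesm
    have hnormsq : Integrable (fun t => ‖w t‖ ^ 2)
        (volume.restrict (Set.Icc (0 : ℝ) 1)) := by
      have h1 := hwmem.integrable_norm_rpow two_ne_zero ENNReal.ofNat_ne_top
      refine h1.congr (Filter.Eventually.of_forall fun t => ?_)
      have h2 : ((2 : ℝ≥0∞).toReal) = (2 : ℝ) := by simp
      rw [h2, show (2 : ℝ) = ((2 : ℕ) : ℝ) by norm_num]
      simp only [Real.rpow_natCast]
    have hf3int : Integrable f3 (volume.restrict (Set.Icc (0 : ℝ) 1)) := by
      refine Integrable.mono' (hnormsq.const_mul C) hf3m ?_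
      refine (ae_restrict_iff' hI).mpr (Filter.Eventually.of_forall fun t ht => ?_)
      have h1 := hlb t ht (w t)
      have h2 := hub t ht (w t)
      rw [Real.norm_eq_abs, abs_le]
      constructor
      · nlinarith [sq_nonneg ‖w t‖]
      · exact h2
    have hf3nonneg : 0 ≤ᵐ[volume.restrict (Set.Icc (0 : ℝ) 1)] f3 :=
      (ae_restrict_iff' hI).mpr (Filter.Eventually.of_forall fun t ht =>
        le_trans (by positivity) (hlb t ht (w t)))
    refine ⟨∫ t in Set.Icc (0 : ℝ) 1, f3 t, ?_, integral_nonneg_of_ae hf3nonneg, ?_, ?_⟩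
    · -- energy identity
      have hptw : ∀ t ∈ Set.Icc (0 : ℝ) 1,
          ⟪A t (m' t), m' t⟫_ℝ = ⟪q, B t q⟫_ℝ + 2 * ⟪q, w t⟫_ℝ + f3 t := by
        intro t ht
        have hm : m' t = B t q + w t := by
          simp only [hwdef, hustardef]; abel
        have hABq : A t (B t q) = q := hAB t ht q
        have hsymterm : ⟪A t (w t), B t q⟫_ℝ = ⟪q, w t⟫_ℝ := by
          rw [hAsym t ht (w t) (B t q), hABq]; exact real_inner_comm _ _
        rw [hm]
        simp only [map_add, inner_add_left, inner_add_right, hABq, hsymterm, hf3def]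
        ring
      rw [setIntegral_congr_fun hI hptw]
      have i1 : Integrable (fun t => ⟪q, B t q⟫_ℝ)
          (volume.restrict (Set.Icc (0 : ℝ) 1)) :=
        (continuousOn_const.inner (hBcont q)).integrableOn_compact isCompact_Icc
      have i2' : Integrable (fun t => ⟪q, w t⟫_ℝ)
          (volume.restrict (Set.Icc (0 : ℝ) 1)) := by
        simpa using (innerSL ℝ q).integrable_comp hwint
      have i2 : Integrable (fun t => 2 * ⟪q, w t⟫_ℝ)
          (volume.restrict (Set.Icc (0 : ℝ) 1)) := i2'.const_mul 2
      have e1 : (∫ t in Set.Icc (0 : ℝ) 1, ⟪q, B t q⟫_ℝ) = ⟪q, b - a⟫_ℝ := by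
        rw [integral_inner (𝕜 := ℝ) (hInt q) q, ← hR q, hRq]
      have e2 : (∫ t in Set.Icc (0 : ℝ) 1, 2 * ⟪q, w t⟫_ℝ) = 0 := by
        rw [integral_const_mul, integral_inner (𝕜 := ℝ) hwint q, hwzero,
          inner_zero_right, mul_zero]
      calc (∫ t in Set.Icc (0 : ℝ) 1, (⟪q, B t q⟫_ℝ + 2 * ⟪q, w t⟫_ℝ + f3 t))
          = (∫ t in Set.Icc (0 : ℝ) 1, (⟪q, B t q⟫_ℝ + 2 * ⟪q, w t⟫_ℝ)) +
            ∫ t in Set.Icc (0 : ℝ) 1, f3 t := integral_add (i1.add i2) hf3int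
        _ = ((∫ t in Set.Icc (0 : ℝ) 1, ⟪q, B t q⟫_ℝ) +
            ∫ t in Set.Icc (0 : ℝ) 1, 2 * ⟪q, w t⟫_ℝ) +
            ∫ t in Set.Icc (0 : ℝ) 1, f3 t := by rw [integral_add i1 i2]
        _ = ⟪q, b - a⟫_ℝ + ∫ t in Set.Icc (0 : ℝ) 1, f3 t := by rw [e1, e2, add_zero]
    · intro hD0
      have hf3zero : f3 =ᵐ[volume.restrict (Set.Icc (0 : ℝ) 1)] 0 :=
        (integral_eq_zero_iff_of_nonneg_ae hf3nonneg hf3int).mp hD0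
      filter_upwards [hf3zero, ae_restrict_mem hI] with t h0 ht
      have h1 := hlb t ht (w t)
      have h0' : ⟪A t (w t), w t⟫_ℝ = 0 := h0
      have hsq : ‖w t‖ ^ 2 = 0 := le_antisymm (by nlinarith) (sq_nonneg _)
      have hw0 : w t = 0 := norm_eq_zero.mp (sq_eq_zero_iff.mp hsq)
      have : m' t - ustar t = 0 := hw0
      exact sub_eq_zero.mp this
    · intro hmu
      have hf30 : f3 =ᵐ[volume.restrict (Set.Icc (0 : ℝ) 1)] 0 := by
        filter_upwards [hmu] with t ht
        have hwt : w t = 0 := by show m' t - ustar t = 0; rw [ht]; exact sub_self _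
        show ⟪A t (w t), w t⟫_ℝ = 0
        rw [hwt]
        simp
      rw [integral_congr_ae hf30]
      simp
  have hqval : ⟪Rinv (b - a), b - a⟫_ℝ = ⟪q, b - a⟫_ℝ := rfl
  refine ⟨hRsa, Rinv, hRinvR, hRRinv, ?_, ?_⟩
  · -- IsLeast
    constructor
    · refine ⟨ustar, hu_mem, hu_end, ?_⟩
      obtain ⟨D, hDeq, _, hDiff⟩ := key ustar hu_mem hu_end
      have hD0 : D = 0 := hDiff.mpr (Filter.EventuallyEq.refl _ _)
      rw [hDeq, hD0, add_zero, hqval]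
    · rintro x ⟨m', hm', hend, rfl⟩
      obtain ⟨D, hDeq, hD0, _⟩ := key m' hm' hend
      rw [hqval, hDeq]
      linarith
  · intro m' hm' hend
    obtain ⟨D, hDeq, hD0, hDiff⟩ := key m' hm' hend
    rw [hqval, hDeq]
    constructor
    · intro heq
      have : D = 0 := by linarith
      exact hDiff.mp this
    · intro hae
      rw [hDiff.mpr hae, add_zero]
end

section
/- Let K_V : ℝ^d × ℝ^d → ℝ^{d×d} be a C¹ matrix-valued kernel with K_V(y, x) = K_V(x, y)ᵀ for all x, y, let K_H : ℝ^d × ℝ^d → ℝ be a C¹ scalar kernel with K_H(y, x) = K_H(x, y), let σ > 0, N ∈ ℕ, and let α₁, …, α_N ∈ ℝ be fixed. Suppose (x₁, …, x_N, z₁, …, z_N) : [0,1] → (ℝ^d)^N × (ℝ^d)^N is a C¹ solution of the system ẋ_k(t) = Σ_{ℓ=1}^N K_V(x_k(t), x_ℓ(t)) z_ℓ(t) and ż_k(t) = − Σ_{ℓ=1}^N ∇₁(z_k(t) · K_V(·, x_ℓ(t)) z_ℓ(t))(x_k(t)) − (1/σ²) Σ_{ℓ=1}^N α_k α_ℓ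 ∇₁ K_H(x_k(t), x_ℓ(t)), where ∇₁ denotes the gradient with respect to the first spatial argument. Then the quantity E(t) = ½ Σ_{k,ℓ=1}^N z_k(t) · K_V(x_k(t), x_ℓ(t)) z_ℓ(t) + (1/(2σ²)) Σ_{k,ℓ=1}^N α_k α_ℓ K_H(x_k(t), x_ℓ(t)) is constant on [0,1]. -/
open scoped BigOperators InnerProductSpace

private lemma inner_gradient_eq' {F : Type*} [NormedAddCommGroup F] [InnerProductSpace ℝ F]
    [CompleteSpace F] {f : F → ℝ} {f' : F →L[ℝ] ℝ} {a : F} (h : HasFDerivAt f f' a) (v : F) :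
    ⟪gradient f a, v⟫_ℝ = f' v := by
  rw [h.hasGradientAt.gradient]
  exact InnerProductSpace.toDual_symm_apply

private lemma aux_alg {N : ℕ} {F : Type*} [NormedAddCommGroup F] [InnerProductSpace ℝ F]
    (σ : ℝ) (hσ : σ ≠ 0) (G H v : Fin N → F) (a b c : Fin N → Fin N → ℝ)
    (ha : ∀ k, ∑ ℓ, a k ℓ = ⟪G k, v k⟫_ℝ)
    (hb : ∀ k, ∑ ℓ, b k ℓ = ⟪-(G k) - (σ ^ 2)⁻¹ • H k, v k⟫_ℝ)
    (hc : ∀ k, ∑ ℓ, c k ℓ = ⟪H k, v k⟫_ℝ) :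
    (1 / 2) * ∑ k, ∑ ℓ, (a k ℓ + a ℓ k + b ℓ k + b k ℓ)
      + (1 / (2 * σ ^ 2)) * ∑ k, ∑ ℓ, (c k ℓ + c ℓ k) = 0 := by
  have swapa : ∑ k, ∑ ℓ, a ℓ k = ∑ k, ∑ ℓ, a k ℓ := Finset.sum_comm
  have swapb : ∑ k, ∑ ℓ, b ℓ k = ∑ k, ∑ ℓ, b k ℓ := Finset.sum_comm
  have swapc : ∑ k, ∑ ℓ, c ℓ k = ∑ k, ∑ ℓ, c k ℓ := Finset.sum_comm
  simp only [Finset.sum_add_distrib]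
  rw [swapa, swapb, swapc]
  have hA : ∑ k, ∑ ℓ, a k ℓ = ∑ k, ⟪G k, v k⟫_ℝ := Finset.sum_congr rfl fun k _ => ha k
  have hC : ∑ k, ∑ ℓ, c k ℓ = ∑ k, ⟪H k, v k⟫_ℝ := Finset.sum_congr rfl fun k _ => hc k
  have hB : ∑ k, ∑ ℓ, b k ℓ
      = -(∑ k, ⟪G k, v k⟫_ℝ) - (σ ^ 2)⁻¹ * ∑ k, ⟪H k, v k⟫_ℝ := by
    rw [Finset.sum_congr rfl fun k _ => hb k]
    simp [inner_sub_left, inner_neg_left, real_inner_smul_left, Finset.sum_sub_distrib,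
      Finset.mul_sum]
  rw [hA, hB, hC]
  have hσ2 : σ ^ 2 ≠ 0 := pow_ne_zero _ hσ
  field_simp
  ring

/-- Conservation of the Hamiltonian along the singular (particle) solutions of
the metamorphosis equations. -/
theorem stmt7 {d N : ℕ} (σ : ℝ) (hσ : 0 < σ)
    (KV : EuclideanSpace ℝ (Fin d) → EuclideanSpace ℝ (Fin d) →
      (EuclideanSpace ℝ (Fin d) →L[ℝ] EuclideanSpace ℝ (Fin d)))
    (KH : EuclideanSpace ℝ (Fin d) → EuclideanSpace ℝ (Fin d) → ℝ)
    (hKV : ContDiff ℝ 1 (fun p : EuclideanSpace ℝ (Fin d) × EuclideanSpace ℝ (Fin d) =>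
      KV p.1 p.2))
    (hKVsymm : ∀ x y, KV y x = ContinuousLinearMap.adjoint (KV x y))
    (hKH : ContDiff ℝ 1 (fun p : EuclideanSpace ℝ (Fin d) × EuclideanSpace ℝ (Fin d) =>
      KH p.1 p.2))
    (hKHsymm : ∀ x y, KH y x = KH x y)
    (α : Fin N → ℝ)
    (x z : Fin N → ℝ → EuclideanSpace ℝ (Fin d))
    (hx : ∀ k, ∀ t ∈ Set.Icc (0 : ℝ) 1,
      HasDerivAt (x k) (∑ ℓ, KV (x k t) (x ℓ t) (z ℓ t)) t)
    (hz : ∀ k, ∀ t ∈ Set.Icc (0 : ℝ) 1,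
      HasDerivAt (z k)
        (-(∑ ℓ, gradient (fun y => ⟪z k t, KV y (x ℓ t) (z ℓ t)⟫_ℝ) (x k t))
          - (σ ^ 2)⁻¹ • ∑ ℓ, (α k * α ℓ) • gradient (fun y => KH y (x ℓ t)) (x k t)) t) :
    ∀ t ∈ Set.Icc (0 : ℝ) 1,
      (1 / 2) * ∑ k, ∑ ℓ, ⟪z k t, KV (x k t) (x ℓ t) (z ℓ t)⟫_ℝ
          + (1 / (2 * σ ^ 2)) * ∑ k, ∑ ℓ, α k * α ℓ * KH (x k t) (x ℓ t)
        = (1 / 2) * ∑ k, ∑ ℓ, ⟪z k 0, KV (x k 0) (x ℓ 0) (z ℓ 0)⟫_ℝ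
          + (1 / (2 * σ ^ 2)) * ∑ k, ∑ ℓ, α k * α ℓ * KH (x k 0) (x ℓ 0) := by
  classical
  have hσ' : σ ≠ 0 := ne_of_gt hσ
  have key : ∀ t ∈ Set.Icc (0 : ℝ) 1,
      HasDerivAt (fun s => (1 / 2) * ∑ k, ∑ ℓ, ⟪z k s, KV (x k s) (x ℓ s) (z ℓ s)⟫_ℝ
          + (1 / (2 * σ ^ 2)) * ∑ k, ∑ ℓ, α k * α ℓ * KH (x k s) (x ℓ s)) 0 t := by
    intro t ht
    have hxd : ∀ k, HasDerivAt (x k) (∑ ℓ, KV (x k t) (x ℓ t) (z ℓ t)) t := fun k => hx k t ht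
    have hzd : ∀ k, HasDerivAt (z k)
        (-(∑ ℓ, gradient (fun y => ⟪z k t, KV y (x ℓ t) (z ℓ t)⟫_ℝ) (x k t))
          - (σ ^ 2)⁻¹ • ∑ ℓ, (α k * α ℓ) • gradient (fun y => KH y (x ℓ t)) (x k t)) t :=
      fun k => hz k t ht
    -- abbreviations
    let v : Fin N → EuclideanSpace ℝ (Fin d) := fun k => ∑ ℓ, KV (x k t) (x ℓ t) (z ℓ t)
    let G : Fin N → EuclideanSpace ℝ (Fin d) :=
      fun k => ∑ ℓ, gradient (fun y => ⟪z k t, KV y (x ℓ t) (z ℓ t)⟫_ℝ) (x k t)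
    let H : Fin N → EuclideanSpace ℝ (Fin d) :=
      fun k => ∑ ℓ, (α k * α ℓ) • gradient (fun y => KH y (x ℓ t)) (x k t)
    let w : Fin N → EuclideanSpace ℝ (Fin d) := fun k => -(G k) - (σ ^ 2)⁻¹ • H k
    let a : Fin N → Fin N → ℝ := fun k ℓ =>
      ⟪gradient (fun y => ⟪z k t, KV y (x ℓ t) (z ℓ t)⟫_ℝ) (x k t), v k⟫_ℝ
    let b : Fin N → Fin N → ℝ := fun k ℓ => ⟪w k, KV (x k t) (x ℓ t) (z ℓ t)⟫_ℝ
    let c : Fin N → Fin N → ℝ := fun k ℓ =>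
      ⟪(α k * α ℓ) • gradient (fun y => KH y (x ℓ t)) (x k t), v k⟫_ℝ
    -- derivative of each kinetic summand
    have hVd : ∀ k ℓ, HasDerivAt (fun s => ⟪z k s, KV (x k s) (x ℓ s) (z ℓ s)⟫_ℝ)
        (a k ℓ + a ℓ k + b ℓ k + b k ℓ) t := by
      intro k ℓ
      set Dp := fderiv ℝ (fun pr : EuclideanSpace ℝ (Fin d) × EuclideanSpace ℝ (Fin d) =>
        KV pr.1 pr.2) (x k t, x ℓ t) with hDp
      have hpair : HasFDerivAt (fun pr : EuclideanSpace ℝ (Fin d) × EuclideanSpace ℝ (Fin d) =>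
          KV pr.1 pr.2) Dp (x k t, x ℓ t) :=
        ((hKV.differentiable one_ne_zero) _).hasFDerivAt
      have hc : HasDerivAt (fun s => KV (x k s) (x ℓ s)) (Dp (v k, v ℓ)) t :=
        by have := hpair.comp_hasDerivAt t ((hxd k).prodMk (hxd ℓ)); exact this
      have h2 := hc.clm_apply (hzd ℓ)
      have h3 := HasDerivAt.inner (𝕜 := ℝ) (hzd k) h2
      refine HasDerivAt.congr_deriv h3 (Eq.symm ?_)
      -- now a scalar identity
      rw [inner_add_right]
      -- T : (Ed →L Ed) →L ℝ,  A ↦ ⟪z k t, A (z ℓ t)⟫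
      set T : (EuclideanSpace ℝ (Fin d) →L[ℝ] EuclideanSpace ℝ (Fin d)) →L[ℝ] ℝ :=
        (innerSL ℝ (z k t)).comp
          (ContinuousLinearMap.apply ℝ (EuclideanSpace ℝ (Fin d)) (z ℓ t)) with hT
      have hmk1 : HasFDerivAt (fun y : EuclideanSpace ℝ (Fin d) => (y, x ℓ t))
          ((ContinuousLinearMap.id ℝ (EuclideanSpace ℝ (Fin d))).prod 0) (x k t) :=
        (hasFDerivAt_id (x k t)).prodMk (hasFDerivAt_const (x ℓ t) (x k t))
      have hmk2 : HasFDerivAt (fun y : EuclideanSpace ℝ (Fin d) => ((x k t), y))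
          ((0 : EuclideanSpace ℝ (Fin d) →L[ℝ] EuclideanSpace ℝ (Fin d)).prod
            (ContinuousLinearMap.id ℝ (EuclideanSpace ℝ (Fin d)))) (x ℓ t) :=
        (hasFDerivAt_const (x k t) (x ℓ t)).prodMk (hasFDerivAt_id (x ℓ t))
      have hD1 : HasFDerivAt (fun y => KV y (x ℓ t))
          (Dp.comp ((ContinuousLinearMap.id ℝ (EuclideanSpace ℝ (Fin d))).prod 0)) (x k t) :=
        by have := hpair.comp (x k t) hmk1; exact this
      have hD2 : HasFDerivAt (fun y => KV (x k t) y)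
          (Dp.comp ((0 : EuclideanSpace ℝ (Fin d) →L[ℝ] EuclideanSpace ℝ (Fin d)).prod
            (ContinuousLinearMap.id ℝ (EuclideanSpace ℝ (Fin d))))) (x ℓ t) :=
        by have := hpair.comp (x ℓ t) hmk2; exact this
      have hf1 : HasFDerivAt (fun y => ⟪z k t, KV y (x ℓ t) (z ℓ t)⟫_ℝ)
          (T.comp (Dp.comp
            ((ContinuousLinearMap.id ℝ (EuclideanSpace ℝ (Fin d))).prod 0))) (x k t) :=
        T.hasFDerivAt.comp _ hD1
      have hf2 : HasFDerivAt (fun y => ⟪z k t, KV (x k t) y (z ℓ t)⟫_ℝ)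
          (T.comp (Dp.comp
            ((0 : EuclideanSpace ℝ (Fin d) →L[ℝ] EuclideanSpace ℝ (Fin d)).prod
              (ContinuousLinearMap.id ℝ (EuclideanSpace ℝ (Fin d)))))) (x ℓ t) :=
        T.hasFDerivAt.comp _ hD2
      have ha1 : a k ℓ = ⟪z k t, Dp (v k, 0) (z ℓ t)⟫_ℝ := by
        have := inner_gradient_eq' hf1 (v k)
        simpa [hT, a] using this
      have hfeq : (fun y => ⟪z ℓ t, KV y (x k t) (z k t)⟫_ℝ)
          = fun y => ⟪z k t, KV (x k t) y (z ℓ t)⟫_ℝ := by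
        funext y
        rw [hKVsymm (x k t) y, real_inner_comm, ContinuousLinearMap.adjoint_inner_left]
      have ha2 : a ℓ k = ⟪z k t, Dp (0, v ℓ) (z ℓ t)⟫_ℝ := by
        show ⟪gradient (fun y => ⟪z ℓ t, KV y (x k t) (z k t)⟫_ℝ) (x ℓ t), v ℓ⟫_ℝ = _
        rw [hfeq]
        have := inner_gradient_eq' hf2 (v ℓ)
        simpa [hT] using this
      have hb1 : b ℓ k = ⟪z k t, KV (x k t) (x ℓ t) (w ℓ)⟫_ℝ := by
        show ⟪w ℓ, KV (x ℓ t) (x k t) (z k t)⟫_ℝ = _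
        rw [hKVsymm (x k t) (x ℓ t), real_inner_comm, ContinuousLinearMap.adjoint_inner_left]
      have hsplit : ⟪z k t, Dp (v k, v ℓ) (z ℓ t)⟫_ℝ
          = ⟪z k t, Dp (v k, 0) (z ℓ t)⟫_ℝ + ⟪z k t, Dp (0, v ℓ) (z ℓ t)⟫_ℝ := by
        have hvv : (v k, v ℓ) = (v k, (0 : EuclideanSpace ℝ (Fin d)))
            + ((0 : EuclideanSpace ℝ (Fin d)), v ℓ) := by
          simp [Prod.ext_iff]
        rw [hvv, map_add, ContinuousLinearMap.add_apply, inner_add_right]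
      rw [ha1, ha2, hb1]
      show ⟪z k t, Dp (v k, 0) (z ℓ t)⟫_ℝ + ⟪z k t, Dp (0, v ℓ) (z ℓ t)⟫_ℝ
          + ⟪z k t, KV (x k t) (x ℓ t) (w ℓ)⟫_ℝ + ⟪w k, KV (x k t) (x ℓ t) (z ℓ t)⟫_ℝ
        = ⟪z k t, Dp (v k, v ℓ) (z ℓ t)⟫_ℝ + ⟪z k t, KV (x k t) (x ℓ t) (w ℓ)⟫_ℝ
          + ⟪w k, KV (x k t) (x ℓ t) (z ℓ t)⟫_ℝ
      rw [hsplit]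
    -- derivative of each potential summand
    have hHd : ∀ k ℓ, HasDerivAt (fun s => α k * α ℓ * KH (x k s) (x ℓ s))
        (c k ℓ + c ℓ k) t := by
      intro k ℓ
      set Dq := fderiv ℝ (fun pr : EuclideanSpace ℝ (Fin d) × EuclideanSpace ℝ (Fin d) =>
        KH pr.1 pr.2) (x k t, x ℓ t) with hDq
      have hpair : HasFDerivAt (fun pr : EuclideanSpace ℝ (Fin d) × EuclideanSpace ℝ (Fin d) =>
          KH pr.1 pr.2) Dq (x k t, x ℓ t) :=
        ((hKH.differentiable one_ne_zero) _).hasFDerivAt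
      have hc0 : HasDerivAt (fun s => KH (x k s) (x ℓ s)) (Dq (v k, v ℓ)) t :=
        by have := hpair.comp_hasDerivAt t ((hxd k).prodMk (hxd ℓ)); exact this
      have h2 := hc0.const_mul (α k * α ℓ)
      refine HasDerivAt.congr_deriv h2 (Eq.symm ?_)
      have hmk1 : HasFDerivAt (fun y : EuclideanSpace ℝ (Fin d) => (y, x ℓ t))
          ((ContinuousLinearMap.id ℝ (EuclideanSpace ℝ (Fin d))).prod 0) (x k t) :=
        (hasFDerivAt_id (x k t)).prodMk (hasFDerivAt_const (x ℓ t) (x k t))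
      have hmk2 : HasFDerivAt (fun y : EuclideanSpace ℝ (Fin d) => ((x k t), y))
          ((0 : EuclideanSpace ℝ (Fin d) →L[ℝ] EuclideanSpace ℝ (Fin d)).prod
            (ContinuousLinearMap.id ℝ (EuclideanSpace ℝ (Fin d)))) (x ℓ t) :=
        (hasFDerivAt_const (x k t) (x ℓ t)).prodMk (hasFDerivAt_id (x ℓ t))
      have hD1 : HasFDerivAt (fun y => KH y (x ℓ t))
          (Dq.comp ((ContinuousLinearMap.id ℝ (EuclideanSpace ℝ (Fin d))).prod 0)) (x k t) :=
        by have := hpair.comp (x k t) hmk1; exact this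
      have hD2 : HasFDerivAt (fun y => KH (x k t) y)
          (Dq.comp ((0 : EuclideanSpace ℝ (Fin d) →L[ℝ] EuclideanSpace ℝ (Fin d)).prod
            (ContinuousLinearMap.id ℝ (EuclideanSpace ℝ (Fin d))))) (x ℓ t) :=
        by have := hpair.comp (x ℓ t) hmk2; exact this
      have hc1 : ⟪gradient (fun y => KH y (x ℓ t)) (x k t), v k⟫_ℝ = Dq (v k, 0) := by
        have := inner_gradient_eq' hD1 (v k)
        simpa using this
      have hfeq : (fun y => KH y (x k t)) = fun y => KH (x k t) y :=
        funext fun y => hKHsymm (x k t) y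
      have hc2 : ⟪gradient (fun y => KH y (x k t)) (x ℓ t), v ℓ⟫_ℝ = Dq (0, v ℓ) := by
        rw [hfeq]
        have := inner_gradient_eq' hD2 (v ℓ)
        simpa using this
      have hsplit : Dq (v k, v ℓ) = Dq (v k, 0) + Dq (0, v ℓ) := by
        have hvv : (v k, v ℓ) = (v k, (0 : EuclideanSpace ℝ (Fin d)))
            + ((0 : EuclideanSpace ℝ (Fin d)), v ℓ) := by
          simp [Prod.ext_iff]
        rw [hvv, map_add]
      show ⟪(α k * α ℓ) • gradient (fun y => KH y (x ℓ t)) (x k t), v k⟫_ℝ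
          + ⟪(α ℓ * α k) • gradient (fun y => KH y (x k t)) (x ℓ t), v ℓ⟫_ℝ = _
      rw [real_inner_smul_left, real_inner_smul_left, hc1, hc2, hsplit]
      ring
    -- assemble
    have hsum : HasDerivAt
        (fun s => (1 / 2) * ∑ k, ∑ ℓ, ⟪z k s, KV (x k s) (x ℓ s) (z ℓ s)⟫_ℝ
          + (1 / (2 * σ ^ 2)) * ∑ k, ∑ ℓ, α k * α ℓ * KH (x k s) (x ℓ s))
        ((1 / 2) * ∑ k, ∑ ℓ, (a k ℓ + a ℓ k + b ℓ k + b k ℓ)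
          + (1 / (2 * σ ^ 2)) * ∑ k, ∑ ℓ, (c k ℓ + c ℓ k)) t :=
      ((HasDerivAt.fun_sum fun k _ => HasDerivAt.fun_sum fun ℓ _ => hVd k ℓ).const_mul _).add
        ((HasDerivAt.fun_sum fun k _ => HasDerivAt.fun_sum fun ℓ _ => hHd k ℓ).const_mul _)
    have halg : (1 / 2) * ∑ k, ∑ ℓ, (a k ℓ + a ℓ k + b ℓ k + b k ℓ)
        + (1 / (2 * σ ^ 2)) * ∑ k, ∑ ℓ, (c k ℓ + c ℓ k) = 0 := by
      refine aux_alg σ hσ' G H v a b c ?_ ?_ ?_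
      · intro k
        rw [← sum_inner]
      · intro k
        rw [← inner_sum]
      · intro k
        rw [← sum_inner]
    rw [halg] at hsum
    exact hsum
  intro t ht
  have hcont : ContinuousOn
      (fun s => (1 / 2) * ∑ k, ∑ ℓ, ⟪z k s, KV (x k s) (x ℓ s) (z ℓ s)⟫_ℝ
        + (1 / (2 * σ ^ 2)) * ∑ k, ∑ ℓ, α k * α ℓ * KH (x k s) (x ℓ s))
      (Set.Icc 0 1) := fun s hs => (key s hs).continuousAt.continuousWithinAt
  exact constant_of_has_deriv_right_zero hcont
    (fun s hs => ((key s (Set.Ico_subset_Icc_self hs)).hasDerivWithinAt)) t ht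
end
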